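/- Let H be a real Hilbert space, c ∈ H, r > 0, and x̄ ∈ H with ‖x̄ − c‖ = r. Let y ∈ H be a direction with ⟨x̄ − c, y⟩ > 0 (so that ‖(x̄ + ty) − c‖ ≥ r for small t > 0). Then the graphical derivative of P_{B(c,r)} at x̄ satisfies DP_{B(c,r)}(x̄)(y) = { y − (1/r²)⟨x̄ − c, y⟩(x̄ − c) }. -/

import Mathlib

open RealInnerProductSpace Filter Metric

/-- `P` is the metric projection (nearest-point map) onto `C`. -/
def IsMetricProj {H : Type*} [NormedAddCommGroup H] [InnerProductSpace ℝ H]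
    (C : Set H) (P : H → H) : Prop :=
  ∀ x : H, P x ∈ C ∧ ∀ w ∈ C, ‖x - P x‖ ≤ ‖x - w‖

/-- The set `D̂*f(xb)(y)` characterized by the limsup inequality. -/
def coderivSet {H : Type*} [NormedAddCommGroup H] [InnerProductSpace ℝ H]
    (f : H → H) (xb y : H) : Set H :=
  {z | ∀ ε > (0:ℝ), ∃ δ > (0:ℝ), ∀ u : H, u ≠ xb → ‖u - xb‖ < δ →
    (⟪z, u - xb⟫ - ⟪y, f u - f xb⟫) / ‖u - xb‖ < ε}

/-- The (Fréchet) regular normal cone via the limsup inequality. -/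
def regNormalCone {E : Type*} [NormedAddCommGroup E] [InnerProductSpace ℝ E]
    (Ω : Set E) (w : E) : Set E :=
  {v | ∀ ε > (0:ℝ), ∃ δ > (0:ℝ), ∀ u ∈ Ω, u ≠ w → ‖u - w‖ < δ →
    ⟪v, u - w⟫ / ‖u - w‖ < ε}

/-- The Bouligand (contingent) tangent cone. -/
def bouligandTangentCone {E : Type*} [NormedAddCommGroup E] [NormedSpace ℝ E]
    (Ω : Set E) (w : E) : Set E :=
  {z | ∃ t : ℕ → ℝ, ∃ s : ℕ → E, (∀ n, 0 < t n) ∧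
    Tendsto t atTop (nhds 0) ∧ Tendsto s atTop (nhds z) ∧ ∀ n, w + t n • s n ∈ Ω}

variable {H : Type*} [NormedAddCommGroup H] [InnerProductSpace ℝ H] [CompleteSpace H]

lemma proj_fixed (c : H) (r : ℝ) (P : H → H) (hP : IsMetricProj (closedBall c r) P)
    (x : H) (hx : ‖x - c‖ ≤ r) : P x = x := by
  have h := (hP x).2 x (by simpa [mem_closedBall, dist_eq_norm] using hx)
  simp only [sub_self, norm_zero] at h
  have h0 : ‖x - P x‖ = 0 := le_antisymm h (norm_nonneg _)
  exact (sub_eq_zero.mp (norm_eq_zero.mp h0)).symm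

lemma proj_formula (c : H) (r : ℝ) (hr : 0 < r) (P : H → H)
    (hP : IsMetricProj (closedBall c r) P) (x : H) (hx : r < ‖x - c‖) :
    P x = c + (r / ‖x - c‖) • (x - c) := by
  set d := ‖x - c‖ with hd
  have hd0 : 0 < d := lt_trans hr hx
  set q : H := c + (r / d) • (x - c) with hq
  have hqc : ‖q - c‖ = r := by
    rw [hq, add_sub_cancel_left, norm_smul, Real.norm_eq_abs,
      abs_of_pos (div_pos hr hd0), ← hd, div_mul_cancel₀ _ hd0.ne']
  have hxq : ‖x - q‖ = d - r := by
    have : x - q = (1 - r / d) • (x - c) := by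
      rw [hq]; module
    rw [this, norm_smul, Real.norm_eq_abs, ← hd,
      abs_of_pos (by rw [sub_pos]; exact (div_lt_one hd0).mpr hx), sub_mul, one_mul,
      div_mul_cancel₀ _ hd0.ne']
  have hle : ‖x - P x‖ ≤ d - r := by
    have := (hP x).2 q (by simp [mem_closedBall, dist_eq_norm, hqc])
    rwa [hxq] at this
  have hPc : ‖P x - c‖ ≤ r := by
    have := (hP x).1; simpa [mem_closedBall, dist_eq_norm] using this
  have htri : d ≤ ‖x - P x‖ + ‖P x - c‖ := by
    have h1 : x - P x + (P x - c) = x - c := by abel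
    calc d = ‖x - P x + (P x - c)‖ := by rw [h1, ← hd]
    _ ≤ _ := norm_add_le _ _
  have hPc' : ‖P x - c‖ = r := le_antisymm hPc (by linarith)
  have hxP : ‖x - P x‖ = d - r := le_antisymm hle (by linarith)
  have hray : SameRay ℝ (x - P x) (P x - c) := by
    rw [sameRay_iff_norm_add]
    have : x - P x + (P x - c) = x - c := by abel
    rw [this, ← hd, hxP, hPc']; ring
  have hray2 : SameRay ℝ (x - c) (P x - c) := by
    have : x - c = (x - P x) + (P x - c) := by abel
    rw [this]
    exact hray.add_left (SameRay.refl _)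
  have := hray2.norm_smul_eq
  rw [← hd, hPc'] at this
  have : P x - c = (r / d) • (x - c) := by
    rw [eq_comm, div_eq_inv_mul, mul_smul, ← this, inv_smul_smul₀ hd0.ne']
  rw [hq, ← this]; abel

lemma key_tendsto (c : H) (r : ℝ) (hr : 0 < r) (xb : H) (hx : ‖xb - c‖ = r)
    (P : H → H) (hP : IsMetricProj (closedBall c r) P) (y : H)
    (hy : 0 < ⟪xb - c, y⟫) (t : ℕ → ℝ) (s : ℕ → H) (ht : ∀ n, 0 < t n)
    (ht0 : Tendsto t atTop (nhds 0)) (hs : Tendsto s atTop (nhds y)) :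
    Tendsto (fun n => (t n)⁻¹ • (P (xb + t n • s n) - xb)) atTop
      (nhds (y - ((1 / r ^ 2) * ⟪xb - c, y⟫) • (xb - c))) := by
  set a : H := xb - c with ha
  set F : ℝ × H → H := fun p =>
    (r / ‖a + p.1 • p.2‖) • p.2 -
      ((2 * ⟪a, p.2⟫ + p.1 * ‖p.2‖ ^ 2) / (‖a + p.1 • p.2‖ * (r + ‖a + p.1 • p.2‖))) • a
    with hF
  have hprod : Tendsto (fun n => ((t n, s n) : ℝ × H)) atTop (nhds (0, y)) :=
    ht0.prodMk_nhds hs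
  have hρcont : Continuous (fun p : ℝ × H => ‖a + p.1 • p.2‖) := by fun_prop
  have hρ0 : ‖a + ((0:ℝ), y).1 • ((0:ℝ), y).2‖ = r := by simp [hx]
  have hinner : Continuous (fun p : ℝ × H => (⟪a, p.2⟫ : ℝ)) :=
    continuous_const.inner continuous_snd
  have hFcont : ContinuousAt F (0, y) := by
    apply ContinuousAt.sub
    · exact (continuousAt_const.div hρcont.continuousAt
        (by rw [hρ0]; exact hr.ne')).smul continuous_snd.continuousAt
    · refine ContinuousAt.smul (ContinuousAt.div ?_ ?_ ?_) continuousAt_const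
      · exact ((continuous_const.mul hinner).add
          (continuous_fst.mul ((continuous_snd.norm).pow 2))).continuousAt
      · exact (hρcont.mul (continuous_const.add hρcont)).continuousAt
      · rw [hρ0]; positivity
  have hF0 : F (0, y) = y - ((1 / r ^ 2) * ⟪a, y⟫) • a := by
    simp only [hF, zero_smul, add_zero, zero_mul, hx, div_self hr.ne', one_smul]
    congr 2
    field_simp; ring
  have hlim : Tendsto (fun n => F (t n, s n)) atTop
      (nhds (y - ((1 / r ^ 2) * ⟪a, y⟫) • a)) := by
    rw [← hF0]; exact hFcont.tendsto.comp hprod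
  have hpos : ∀ᶠ n in atTop, 0 < 2 * ⟪a, s n⟫ + t n * ‖s n‖ ^ 2 := by
    have hT : Tendsto (fun n => 2 * ⟪a, s n⟫ + t n * ‖s n‖ ^ 2) atTop
        (nhds (2 * ⟪a, y⟫ + 0 * ‖y‖ ^ 2)) := by
      apply Tendsto.add
      · exact tendsto_const_nhds.mul
          (((continuous_const.inner continuous_id).tendsto y).comp hs)
      · exact ht0.mul ((hs.norm).pow 2)
    exact hT.eventually (eventually_gt_nhds (by simpa using hy))
  have heq : ∀ᶠ n in atTop,
      F (t n, s n) = (t n)⁻¹ • (P (xb + t n • s n) - xb) := by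
    filter_upwards [hpos] with n hn
    set tn := t n
    set sn := s n
    have htn : 0 < tn := ht n
    have hρsq : ‖a + tn • sn‖ ^ 2 = r ^ 2 + tn * (2 * ⟪a, sn⟫ + tn * ‖sn‖ ^ 2) := by
      rw [norm_add_sq_real, real_inner_smul_right, norm_smul, Real.norm_eq_abs,
        abs_of_pos htn, ha, hx]
      ring
    have hρgt : r < ‖a + tn • sn‖ := by
      have h2 : r ^ 2 < ‖a + tn • sn‖ ^ 2 := by rw [hρsq]; nlinarith
      exact lt_of_pow_lt_pow_left₀ 2 (norm_nonneg _) h2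
    have hρpos : (0:ℝ) < ‖a + tn • sn‖ := lt_trans hr hρgt
    have hxc : xb + tn • sn - c = a + tn • sn := by rw [ha]; abel
    have hPx : P (xb + tn • sn) = c + (r / ‖a + tn • sn‖) • (a + tn • sn) := by
      rw [proj_formula c r hr P hP _ (by rw [hxc]; exact hρgt), hxc]
    show F (tn, sn) = tn⁻¹ • (P (xb + tn • sn) - xb)
    rw [hPx, hF]
    have hxb : xb = c + a := by rw [ha]; abel
    rw [hxb]
    match_scalars <;> field_simp
    case _ => linear_combination hρsq
    case _ => linear_combination (-1 : ℝ) * hρsq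
  exact hlim.congr' heq

theorem stmt17' (c : H) (r : ℝ) (hr : 0 < r) (xb : H) (hx : ‖xb - c‖ = r)
    (P : H → H) (hP : IsMetricProj (closedBall c r) P) (y : H)
    (hy : 0 < ⟪xb - c, y⟫) :
    {w : H | (y, w) ∈ {z : H × H | ∃ t : ℕ → ℝ, ∃ s : ℕ → H × H, (∀ n, 0 < t n) ∧
      Tendsto t atTop (nhds 0) ∧ Tendsto s atTop (nhds z) ∧
      ∀ n, (xb, P xb) + t n • s n ∈ {p : H × H | p.2 = P p.1}}} =
      {y - ((1 / r ^ 2) * ⟪xb - c, y⟫) • (xb - c)} := by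
  have hPxb : P xb = xb := proj_fixed c r P hP xb (le_of_eq hx)
  ext w
  simp only [Set.mem_setOf_eq, Set.mem_singleton_iff]
  constructor
  · rintro ⟨t, s, ht, ht0, hs, hmem⟩
    have hs1 : Tendsto (fun n => (s n).1) atTop (nhds y) :=
      (continuous_fst.tendsto (y, w)).comp hs
    have hs2 : Tendsto (fun n => (s n).2) atTop (nhds w) :=
      (continuous_snd.tendsto (y, w)).comp hs
    have hrel : ∀ n, (s n).2 = (t n)⁻¹ • (P (xb + t n • (s n).1) - xb) := by
      intro n
      have h := hmem n
      simp only [Set.mem_setOf_eq, Prod.fst_add, Prod.snd_add, Prod.smul_fst,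
        Prod.smul_snd, hPxb] at h
      rw [eq_inv_smul_iff₀ (ht n).ne', ← h]
      abel
    have hkey := key_tendsto c r hr xb hx P hP y hy t (fun n => (s n).1) ht ht0 hs1
    have : Tendsto (fun n => (s n).2) atTop
        (nhds (y - ((1 / r ^ 2) * ⟪xb - c, y⟫) • (xb - c))) := by
      simpa only [← hrel] using hkey
    exact tendsto_nhds_unique hs2 this
  · rintro rfl
    refine ⟨fun n => (n + 1 : ℝ)⁻¹,
      fun n => (y, ((n + 1 : ℝ)⁻¹)⁻¹ • (P (xb + ((n:ℝ) + 1)⁻¹ • y) - xb)), ?_, ?_, ?_, ?_⟩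
    · intro n; positivity
    · simpa using tendsto_one_div_add_atTop_nhds_zero_nat (𝕜 := ℝ)
    · refine Tendsto.prodMk_nhds tendsto_const_nhds ?_
      have := key_tendsto c r hr xb hx P hP y hy (fun n => ((n:ℝ) + 1)⁻¹)
        (fun _ => y) (fun n => by positivity)
        (by simpa using tendsto_one_div_add_atTop_nhds_zero_nat (𝕜 := ℝ)) tendsto_const_nhds
      simpa using this
    · intro n
      have hn : ((n:ℝ) + 1)⁻¹ ≠ 0 := by positivity
      simp only [Set.mem_setOf_eq, Prod.snd_add, Prod.smul_snd, Prod.fst_add,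
        Prod.smul_fst, hPxb]
      rw [inv_inv, smul_smul, inv_mul_cancel₀ (by positivity : ((n:ℝ)+1) ≠ 0), one_smul]
      abel


theorem stmt17 (c : H) (r : ℝ) (hr : 0 < r) (xb : H) (hx : ‖xb - c‖ = r)
    (P : H → H) (hP : IsMetricProj (closedBall c r) P) (y : H)
    (hy : 0 < ⟪xb - c, y⟫) :
    {w : H | (y, w) ∈ bouligandTangentCone {p : H × H | p.2 = P p.1} (xb, P xb)} =
      {y - ((1 / r ^ 2) * ⟪xb - c, y⟫) • (xb - c)} := by
  exact stmt17' c r hr xb hx P hP y hy
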